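/- Let α, β, γ, μ, ν be an admissible solution of System A on [0,∞) with μ ≡ 0 and ν(0) ≠ 0. Then the ratio x(t) := β(t)/α(t) converges, as t → ∞, to a constant x_∞ with 0 < x_∞ < ∞. -/

import Mathlib

open Set Filter Topology

private lemma antitoneOn_max_aux' {G H G' H' : ℝ → ℝ}
    (hG : ∀ t ∈ Set.Ici (0:ℝ), HasDerivWithinAt G (G' t) (Set.Ici 0) t)
    (hH : ∀ t ∈ Set.Ici (0:ℝ), HasDerivWithinAt H (H' t) (Set.Ici 0) t)
    (hG0 : ∀ t ∈ Set.Ici (0:ℝ), H t ≤ G t → G' t ≤ 0)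
    (hH0 : ∀ t ∈ Set.Ici (0:ℝ), G t ≤ H t → H' t ≤ 0) :
    AntitoneOn (fun t => max (G t) (H t)) (Set.Ici 0) := by
  have hGc : ContinuousOn G (Set.Ici 0) := fun t ht => (hG t ht).continuousWithinAt
  have hHc : ContinuousOn H (Set.Ici 0) := fun t ht => (hH t ht).continuousWithinAt
  intro a ha b hb hab
  have hsub : Icc a b ⊆ Ici 0 := fun z hz => le_trans ha hz.1
  have key := image_le_of_liminf_slope_right_le_deriv_boundary
    (f := fun t => max (G t) (H t)) (a := a) (b := b)
    ((hGc.mono hsub).sup (hHc.mono hsub) : ContinuousOn _ _)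
    (B := fun _ => max (G a) (H a)) (B' := fun _ => 0)
    le_rfl continuousOn_const (fun x _ => hasDerivWithinAt_const x _ _)
    ?_ ⟨hab, le_rfl⟩
  · exact key
  · intro x hx r hr
    have hx0 : x ∈ Ici (0:ℝ) := le_trans ha hx.1
    have hIoi : Ioi x ⊆ Ici (0:ℝ) := fun z hz => show (0:ℝ) ≤ z from le_trans hx0 (le_of_lt hz)
    have hGslope : Tendsto (slope G x) (𝓝[>] x) (𝓝 (G' x)) := by
      have := (hasDerivWithinAt_iff_tendsto_slope.1 ((hG x hx0).mono hIoi))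
      refine this.mono_left (nhdsWithin_mono x ?_)
      intro z hz; exact ⟨hz, ne_of_gt hz⟩
    have hHslope : Tendsto (slope H x) (𝓝[>] x) (𝓝 (H' x)) := by
      have := (hasDerivWithinAt_iff_tendsto_slope.1 ((hH x hx0).mono hIoi))
      refine this.mono_left (nhdsWithin_mono x ?_)
      intro z hz; exact ⟨hz, ne_of_gt hz⟩
    rcases lt_trichotomy (G x) (H x) with hlt | heq | hgt
    · have hH'le : H' x ≤ 0 := hH0 x hx0 (le_of_lt hlt)
      have h1 : ∀ᶠ z in 𝓝[>] x, slope H x z < r := hHslope.eventually_lt_const (lt_of_le_of_lt hH'le hr)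
      have h2 : ∀ᶠ z in 𝓝[>] x, G z < H z := by
        have hcont : Tendsto (fun z => G z - H z) (𝓝[>] x) (𝓝 (G x - H x)) := by
          have := ((hGc x hx0).sub (hHc x hx0)).tendsto
          exact this.mono_left (nhdsWithin_mono x hIoi)
        have := hcont.eventually_lt_const (u := (0:ℝ)) (by linarith)
        filter_upwards [this] with z hz; linarith
      refine ((h1.and h2).mono ?_).frequently
      rintro z ⟨h1z, h2z⟩
      have hz' : max (G z) (H z) = H z := max_eq_right (le_of_lt h2z)
      have hVx : max (G x) (H x) = H x := max_eq_right (le_of_lt hlt)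
      simpa [slope_def_field, hz', hVx] using h1z
    · have hG'le : G' x ≤ 0 := hG0 x hx0 (le_of_eq heq.symm)
      have hH'le : H' x ≤ 0 := hH0 x hx0 (le_of_eq heq)
      have h1 : ∀ᶠ z in 𝓝[>] x, slope G x z < r := hGslope.eventually_lt_const (lt_of_le_of_lt hG'le hr)
      have h2 : ∀ᶠ z in 𝓝[>] x, slope H x z < r := hHslope.eventually_lt_const (lt_of_le_of_lt hH'le hr)
      refine ((h1.and h2).mono ?_).frequently
      rintro z ⟨h1z, h2z⟩
      have hVx : max (G x) (H x) = G x := by rw [heq]; simp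
      rcases le_total (G z) (H z) with hcz | hcz
      · have hz' : max (G z) (H z) = H z := max_eq_right hcz
        simpa [slope_def_field, hz', hVx, heq] using h2z
      · have hz' : max (G z) (H z) = G z := max_eq_left hcz
        simpa [slope_def_field, hz', hVx] using h1z
    · have hG'le : G' x ≤ 0 := hG0 x hx0 (le_of_lt hgt)
      have h1 : ∀ᶠ z in 𝓝[>] x, slope G x z < r := hGslope.eventually_lt_const (lt_of_le_of_lt hG'le hr)
      have h2 : ∀ᶠ z in 𝓝[>] x, H z < G z := by
        have hcont : Tendsto (fun z => H z - G z) (𝓝[>] x) (𝓝 (H x - G x)) := by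
          have := ((hHc x hx0).sub (hGc x hx0)).tendsto
          exact this.mono_left (nhdsWithin_mono x hIoi)
        have := hcont.eventually_lt_const (u := (0:ℝ)) (by linarith)
        filter_upwards [this] with z hz; linarith
      refine ((h1.and h2).mono ?_).frequently
      rintro z ⟨h1z, h2z⟩
      have hz' : max (G z) (H z) = G z := max_eq_left (le_of_lt h2z)
      have hVx : max (G x) (H x) = G x := max_eq_left (le_of_lt hgt)
      simpa [slope_def_field, hz', hVx] using h1z

private lemma tendsto_of_antitoneOn_Ici' {f : ℝ → ℝ} (hf : AntitoneOn f (Set.Ici 0)) {m : ℝ}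
    (hm : ∀ t ∈ Set.Ici (0:ℝ), m ≤ f t) :
    ∃ L, m ≤ L ∧ Filter.Tendsto f Filter.atTop (nhds L) := by
  set g : ℝ → ℝ := fun t => f (max t 0) with hg
  have hganti : Antitone g := by
    intro s t hst
    exact hf (le_max_right s 0) (le_max_right t 0) (max_le_max hst le_rfl)
  have hbdd : BddBelow (Set.range g) := by
    refine ⟨m, ?_⟩
    rintro y ⟨t, rfl⟩
    exact hm _ (le_max_right t 0)
  have htend := tendsto_atTop_ciInf hganti hbdd
  refine ⟨⨅ t, g t, ?_, ?_⟩
  · exact le_ciInf fun t => hm _ (le_max_right t 0)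
  · refine htend.congr' ?_
    filter_upwards [eventually_ge_atTop (0:ℝ)] with t ht
    simp [hg, max_eq_left ht]

set_option maxHeartbeats 1000000 in


/-- **System A**: the homogeneous Ricci flow equations on `SO(3) ⋉ ℝ³ / SO(2)` for
real-valued differentiable functions `α β γ μ ν` on a set `s`, with `τ := μ² + ν²`,
together with the admissibility conditions `α > 0`, `β > 0`, `γ > 0`, `βγ > τ`. -/
def IsAdmissibleSolutionA (α β γ μ ν : ℝ → ℝ) (s : Set ℝ) : Prop :=
  ∀ t ∈ s,
    0 < α t ∧ 0 < β t ∧ 0 < γ t ∧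
    μ t ^ 2 + ν t ^ 2 < β t * γ t ∧
    HasDerivWithinAt α
      (2 * (β t ^ 2 - α t ^ 2) / (β t * γ t - (μ t ^ 2 + ν t ^ 2)) -
        4 * α t ^ 2 * ν t ^ 2 / (β t * γ t - (μ t ^ 2 + ν t ^ 2)) ^ 2) s t ∧
    HasDerivWithinAt β
      (β t / α t * ((α t ^ 2 - β t ^ 2) / (β t * γ t - (μ t ^ 2 + ν t ^ 2)))) s t ∧
    HasDerivWithinAt γ
      (-4 + 2 * β t / α t +
        γ t / α t * ((α t ^ 2 - β t ^ 2) / (β t * γ t - (μ t ^ 2 + ν t ^ 2)))) s t ∧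
    HasDerivWithinAt μ
      (μ t * (α t ^ 2 - β t ^ 2) / (α t * (β t * γ t - (μ t ^ 2 + ν t ^ 2)))) s t ∧
    HasDerivWithinAt ν
      (-(ν t * (α t ^ 2 + β t ^ 2)) / (α t * (β t * γ t - (μ t ^ 2 + ν t ^ 2)))) s t

/-- For an admissible solution of System A on `[0,∞)` with `μ ≡ 0` and `ν(0) ≠ 0`,
the ratio `x(t) := β(t)/α(t)` converges as `t → ∞` to a constant `x_∞ ∈ (0, ∞)`. -/
theorem systemA_ratio_converges (α β γ μ ν : ℝ → ℝ)
    (h : IsAdmissibleSolutionA α β γ μ ν (Set.Ici 0))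
    (hμ : ∀ t ∈ Set.Ici (0 : ℝ), μ t = 0) (hν0 : ν 0 ≠ 0) :
    ∃ xInf : ℝ, 0 < xInf ∧
      Filter.Tendsto (fun t => β t / α t) Filter.atTop (nhds xInf) := by
  classical
  -- basic data with μ eliminated
  have hpos : ∀ t ∈ Set.Ici (0:ℝ),
      0 < α t ∧ 0 < β t ∧ 0 < γ t ∧ ν t ^ 2 < β t * γ t := by
    intro t ht
    obtain ⟨h1, h2, h3, h4, _⟩ := h t ht
    refine ⟨h1, h2, h3, ?_⟩
    have e : μ t ^ 2 + ν t ^ 2 = ν t ^ 2 := by rw [hμ t ht]; ring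
    rwa [e] at h4
  -- the key auxiliary functions
  set u : ℝ → ℝ := fun t => Real.log (β t) - Real.log (α t) with hu_def
  set F : ℝ → ℝ := fun t => ν t ^ 2 / (β t * γ t - ν t ^ 2) with hF_def
  set uD : ℝ → ℝ := fun t => (α t / (β t * γ t - ν t ^ 2)) *
      (3 * (1 - (β t / α t) ^ 2) + 4 * (ν t ^ 2 / (β t * γ t - ν t ^ 2))) with huD_def
  set FD : ℝ → ℝ := fun t => -((α t / (β t * γ t - ν t ^ 2)) *
      (ν t ^ 2 / (β t * γ t - ν t ^ 2)) *
      (2 * ((β t / α t) - 1) ^ 2 + 2 + 4 * (ν t ^ 2 / (β t * γ t - ν t ^ 2)))) with hFD_def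
  -- derivatives of u and F
  have hderiv : ∀ t ∈ Set.Ici (0:ℝ),
      HasDerivWithinAt u (uD t) (Set.Ici 0) t ∧ HasDerivWithinAt F (FD t) (Set.Ici 0) t := by
    intro t ht
    obtain ⟨ha, hb, hc, hbg, hαd, hβd, hγd, _, hνd⟩ := h t ht
    have e : μ t ^ 2 + ν t ^ 2 = ν t ^ 2 := by rw [hμ t ht]; ring
    rw [e] at hαd hβd hγd hνd hbg
    have hDpos : 0 < β t * γ t - ν t ^ 2 := sub_pos.2 hbg
    have hDne : β t * γ t - ν t ^ 2 ≠ 0 := hDpos.ne'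
    have hane : α t ≠ 0 := ha.ne'
    have hbne : β t ≠ 0 := hb.ne'
    constructor
    · have h1 := (hβd.log hbne).sub (hαd.log hane)
      refine HasDerivWithinAt.congr_deriv h1 ?_
      simp only [huD_def]
      field_simp
      ring
    · have hnum : HasDerivWithinAt (fun y => ν y ^ 2)
          ((2:ℕ) * ν t ^ 1 * (-(ν t * (α t ^ 2 + β t ^ 2)) / (α t * (β t * γ t - ν t ^ 2))))
          (Set.Ici 0) t := hνd.pow 2
      have hden : HasDerivWithinAt (fun y => β y * γ y - ν y ^ 2)
          ((β t / α t * ((α t ^ 2 - β t ^ 2) / (β t * γ t - ν t ^ 2))) * γ t +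
            β t * (-4 + 2 * β t / α t + γ t / α t * ((α t ^ 2 - β t ^ 2) / (β t * γ t - ν t ^ 2))) -
            (2:ℕ) * ν t ^ 1 * (-(ν t * (α t ^ 2 + β t ^ 2)) / (α t * (β t * γ t - ν t ^ 2))))
          (Set.Ici 0) t := (hβd.mul hγd).sub (hνd.pow 2)
      have h2 := hnum.div hden hDne
      refine HasDerivWithinAt.congr_deriv h2 ?_
      simp only [hFD_def]
      field_simp
      ring
  -- G, H and their derivatives
  set G : ℝ → ℝ := fun t => u t + 2 * F t with hG_def
  set H : ℝ → ℝ := fun t => -u t + 2 * F t with hH_def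
  have hGd : ∀ t ∈ Set.Ici (0:ℝ), HasDerivWithinAt G (uD t + 2 * FD t) (Set.Ici 0) t :=
    fun t ht => ((hderiv t ht).1).add (((hderiv t ht).2).const_mul 2)
  have hHd : ∀ t ∈ Set.Ici (0:ℝ), HasDerivWithinAt H (-uD t + 2 * FD t) (Set.Ici 0) t :=
    fun t ht => ((hderiv t ht).1).neg.add (((hderiv t ht).2).const_mul 2)
  -- basic positivity facts
  have hFnonneg : ∀ t ∈ Set.Ici (0:ℝ), 0 ≤ F t := by
    intro t ht
    obtain ⟨_, _, _, hbg⟩ := hpos t ht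
    exact div_nonneg (sq_nonneg _) (sub_pos.2 hbg).le
  have hFDle : ∀ t ∈ Set.Ici (0:ℝ), FD t ≤ 0 := by
    intro t ht
    obtain ⟨ha, hb, hc, hbg⟩ := hpos t ht
    have hDpos : 0 < β t * γ t - ν t ^ 2 := sub_pos.2 hbg
    have h1 : 0 ≤ (α t / (β t * γ t - ν t ^ 2)) * (ν t ^ 2 / (β t * γ t - ν t ^ 2)) *
        (2 * ((β t / α t) - 1) ^ 2 + 2 + 4 * (ν t ^ 2 / (β t * γ t - ν t ^ 2))) := by
      positivity
    simp only [hFD_def]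
    linarith
  -- derivative sign conditions for G and H
  have hGle : ∀ t ∈ Set.Ici (0:ℝ), H t ≤ G t → uD t + 2 * FD t ≤ 0 := by
    intro t ht hHG
    obtain ⟨ha, hb, hc, hbg⟩ := hpos t ht
    have hDpos : 0 < β t * γ t - ν t ^ 2 := sub_pos.2 hbg
    have hu0 : 0 ≤ u t := by
      simp only [hG_def, hH_def] at hHG
      linarith
    have hab : α t ≤ β t := by
      have := Real.log_le_log_iff ha hb
      simp only [hu_def] at hu0
      exact this.1 (by linarith)
    have hx1 : 1 ≤ β t / α t := (one_le_div ha).2 hab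
    set X := β t / α t
    set A := α t / (β t * γ t - ν t ^ 2) with hA_def
    set E := ν t ^ 2 / (β t * γ t - ν t ^ 2) with hE_def
    have hA : 0 < A := by positivity
    have hE : 0 ≤ E := div_nonneg (sq_nonneg _) hDpos.le
    simp only [huD_def, hFD_def]
    have key : A * (3 * (1 - X ^ 2) + 4 * E) + 2 * -(A * E * (2 * (X - 1) ^ 2 + 2 + 4 * E)) =
        A * (3 * (1 - X ^ 2) - 4 * E * (X - 1) ^ 2 - 8 * E ^ 2) := by ring
    rw [key]
    have h1 : 3 * (1 - X ^ 2) - 4 * E * (X - 1) ^ 2 - 8 * E ^ 2 ≤ 0 := by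
      nlinarith [mul_nonneg hE (sq_nonneg (X - 1)), sq_nonneg E]
    exact mul_nonpos_of_nonneg_of_nonpos hA.le h1
  have hHle : ∀ t ∈ Set.Ici (0:ℝ), G t ≤ H t → -uD t + 2 * FD t ≤ 0 := by
    intro t ht hGH
    obtain ⟨ha, hb, hc, hbg⟩ := hpos t ht
    have hDpos : 0 < β t * γ t - ν t ^ 2 := sub_pos.2 hbg
    have hu0 : u t ≤ 0 := by
      simp only [hG_def, hH_def] at hGH
      linarith
    have hab : β t ≤ α t := by
      have := Real.log_le_log_iff hb ha
      simp only [hu_def] at hu0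
      exact this.1 (by linarith)
    have hx1 : β t / α t ≤ 1 := (div_le_one ha).2 hab
    set X := β t / α t
    set A := α t / (β t * γ t - ν t ^ 2) with hA_def
    set E := ν t ^ 2 / (β t * γ t - ν t ^ 2) with hE_def
    have hA : 0 < A := by positivity
    have hE : 0 ≤ E := div_nonneg (sq_nonneg _) hDpos.le
    simp only [huD_def, hFD_def]
    have key : -(A * (3 * (1 - X ^ 2) + 4 * E)) + 2 * -(A * E * (2 * (X - 1) ^ 2 + 2 + 4 * E)) =
        A * (3 * (X ^ 2 - 1) - 4 * E * (X - 1) ^ 2 - 8 * E - 8 * E ^ 2) := by ring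
    rw [key]
    have hXpos : 0 < X := div_pos hb ha
    have h1 : 3 * (X ^ 2 - 1) - 4 * E * (X - 1) ^ 2 - 8 * E - 8 * E ^ 2 ≤ 0 := by
      nlinarith [mul_nonneg hE (sq_nonneg (X - 1)), sq_nonneg E,
        mul_nonneg (sub_nonneg.2 hx1) hXpos.le]
    exact mul_nonpos_of_nonneg_of_nonpos hA.le h1
  -- V = max G H is antitone and nonnegative
  have hVanti : AntitoneOn (fun t => max (G t) (H t)) (Set.Ici 0) :=
    antitoneOn_max_aux' hGd hHd hGle hHle
  have hVnonneg : ∀ t ∈ Set.Ici (0:ℝ), (0:ℝ) ≤ max (G t) (H t) := by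
    intro t ht
    have hF0 := hFnonneg t ht
    rcases le_total 0 (u t) with hc | hc
    · exact le_max_of_le_left (by simp only [hG_def]; linarith)
    · exact le_max_of_le_right (by simp only [hH_def]; linarith)
  -- F is antitone (reuse the max lemma with G = H = F)
  have hFanti : AntitoneOn F (Set.Ici 0) := by
    have := antitoneOn_max_aux' (G := F) (H := F) (G' := FD) (H' := FD)
      (fun t ht => (hderiv t ht).2) (fun t ht => (hderiv t ht).2)
      (fun t ht _ => hFDle t ht) (fun t ht _ => hFDle t ht)
    simpa [max_self] using this
  -- limits
  obtain ⟨LV, _, hLV⟩ := tendsto_of_antitoneOn_Ici' hVanti (m := 0) hVnonneg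
  obtain ⟨LF, _, hLF⟩ := tendsto_of_antitoneOn_Ici' hFanti (m := 0) hFnonneg
  -- |u| converges to ℓ
  have habs_eq : ∀ t, max (G t) (H t) - 2 * F t = |u t| := by
    intro t
    simp only [hG_def, hH_def]
    rw [abs_eq_max_neg]
    rcases le_total (u t) (-u t) with hc | hc
    · rw [max_eq_right hc, max_eq_right (by linarith)]; ring
    · rw [max_eq_left hc, max_eq_left (by linarith)]; ring
  have habs : Tendsto (fun t => |u t|) atTop (𝓝 (LV - 2 * LF)) := by
    have := hLV.sub (hLF.const_mul 2)
    refine this.congr ?_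
    intro t
    simpa [mul_comm] using habs_eq t
  set ℓ := LV - 2 * LF with hℓ_def
  have hℓ0 : 0 ≤ ℓ := ge_of_tendsto' habs fun t => abs_nonneg _
  -- obtain the limit of u itself
  have hucont : ContinuousOn u (Set.Ici 0) := fun t ht => ((hderiv t ht).1).continuousWithinAt
  have hufinal : ∃ L : ℝ, Tendsto u atTop (𝓝 L) := by
    rcases eq_or_lt_of_le hℓ0 with hc | hc
    · refine ⟨0, ?_⟩
      have h1 : Tendsto (fun t => -|u t|) atTop (𝓝 0) := by
        have := habs.neg
        rw [← hc] at this
        simpa using this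
      have h2 : Tendsto (fun t => |u t|) atTop (𝓝 0) := by rw [← hc] at habs; exact habs
      exact tendsto_of_tendsto_of_tendsto_of_le_of_le h1 h2
        (fun t => neg_abs_le _) (fun t => le_abs_self _)
    · -- ℓ > 0 : u is eventually of constant sign
      have hev : ∀ᶠ t in atTop, ℓ / 2 < |u t| ∧ (0:ℝ) ≤ t :=
        (habs.eventually_const_lt (half_lt_self hc)).and (eventually_ge_atTop 0)
      obtain ⟨T, hT⟩ := eventually_atTop.1 hev
      have hT0 : (0:ℝ) ≤ max T 0 := le_max_right T 0
      have hTprop : ∀ t, max T 0 ≤ t → ℓ / 2 < |u t| ∧ (0:ℝ) ≤ t :=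
        fun t htt => hT t (le_trans (le_max_left T 0) htt)
      set T' := max T 0 with hT'_def
      have huT : u T' ≠ 0 := by
        have := (hTprop T' le_rfl).1
        intro hz
        rw [hz] at this
        simp at this
        linarith
      have hsign : ∀ t, T' ≤ t → (0 < u T' → 0 < u t) ∧ (u T' < 0 → u t < 0) := by
        intro t htt
        have hut : u t ≠ 0 := by
          have := (hTprop t htt).1
          intro hz; rw [hz] at this; simp at this; linarith
        constructor
        · intro hpos
          by_contra hneg
          push_neg at hneg
          have hneg' : u t < 0 := lt_of_le_of_ne hneg hut
          have hcont : ContinuousOn u (Icc T' t) :=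
            hucont.mono (fun z hz => le_trans hT0 hz.1)
          have hmem : (0:ℝ) ∈ Icc (u t) (u T') := ⟨hneg'.le, hpos.le⟩
          obtain ⟨c, hcmem, hc0⟩ := intermediate_value_Icc' htt hcont hmem
          have := (hTprop c hcmem.1).1
          rw [hc0] at this
          simp at this
          linarith
        · intro hneg
          by_contra hpos
          push_neg at hpos
          have hpos' : 0 < u t := lt_of_le_of_ne hpos (Ne.symm hut)
          have hcont : ContinuousOn u (Icc T' t) :=
            hucont.mono (fun z hz => le_trans hT0 hz.1)
          have hmem : (0:ℝ) ∈ Icc (u T') (u t) := ⟨hneg.le, hpos'.le⟩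
          obtain ⟨c, hcmem, hc0⟩ := intermediate_value_Icc htt hcont hmem
          have := (hTprop c hcmem.1).1
          rw [hc0] at this
          simp at this
          linarith
      rcases lt_or_gt_of_ne huT with hneg | hpos
      · -- u < 0 eventually, u → -ℓ
        refine ⟨-ℓ, ?_⟩
        refine habs.neg.congr' ?_
        filter_upwards [eventually_ge_atTop T'] with t ht
        have := (hsign t ht).2 hneg
        rw [abs_of_neg this]
        ring
      · -- u > 0 eventually, u → ℓ
        refine ⟨ℓ, ?_⟩
        refine habs.congr' ?_
        filter_upwards [eventually_ge_atTop T'] with t ht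
        have := (hsign t ht).1 hpos
        rw [abs_of_pos this]
  obtain ⟨L, hL⟩ := hufinal
  refine ⟨Real.exp L, Real.exp_pos L, ?_⟩
  have hexp : Tendsto (fun t => Real.exp (u t)) atTop (𝓝 (Real.exp L)) :=
    (Real.continuous_exp.tendsto L).comp hL
  refine hexp.congr' ?_
  filter_upwards [eventually_ge_atTop (0:ℝ)] with t ht
  obtain ⟨ha, hb, _, _⟩ := hpos t ht
  simp only [hu_def]
  rw [Real.exp_sub, Real.exp_log hb, Real.exp_log ha]
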